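/- The multistep Shanks transformation is quasilinear: let a, b be real numbers with a ≠ 0 and let T_n = a·S_n + b. Then for every k ≥ 0 and n ≥ 0 with H_k(Δ^{m+1} S_n) ≠ 0, one has H_k(Δ^{m+1} T_n) = a^k·H_k(Δ^{m+1} S_n) ≠ 0 and H_{k+1}(T_n)/H_k(Δ^{m+1} T_n) = a·H_{k+1}(S_n)/H_k(Δ^{m+1} S_n) + b, i.e., e_{k,m}(aS_n + b) = a·e_{k,m}(S_n) + b. -/

import Mathlib

/-- Forward difference operator: `(fd u) n = u (n+1) - u n`.
Iterated differences are `fd^[i] u`. -/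
def fd (u : ℕ → ℝ) : ℕ → ℝ := fun n => u (n + 1) - u n

/-- Hankel-type determinant `H_k(u_n)` (depending on the fixed integer `m`):
the determinant of the `k × k` matrix whose `(i,j)` entry is `Δ^{i·m} u_{n+j}`.
By convention `H_k = 0` for `k < 0`, and `H_0 = 1` (empty determinant). -/
noncomputable def Hd (m : ℕ) (u : ℕ → ℝ) (k : ℤ) (n : ℕ) : ℝ :=
  if k < 0 then 0
  else Matrix.det (Matrix.of fun i j : Fin k.toNat => fd^[i.val * m] u (n + j.val))

/-- Iterating `fd` at least once kills the constant of an affine transform. -/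
lemma fd_iter_affine (a b : ℝ) (S T : ℕ → ℝ) (hT : ∀ n : ℕ, T n = a * S n + b) :
    ∀ p n : ℕ, fd^[p + 1] T n = a * fd^[p + 1] S n := by
  intro p
  induction p with
  | zero => intro n; simp [fd, hT]; ring
  | succ p ih =>
      intro n
      rw [Function.iterate_succ_apply' fd (p+1) T, Function.iterate_succ_apply' fd (p+1) S]
      simp [fd, ih]; ring

/-- Column-reduction identity: the `(k+1)×(k+1)` determinant with a row of ones
on top equals the `k×k` Hankel determinant of `Δ^{m+1} S`. -/
lemma key_det (m k n : ℕ) (S : ℕ → ℝ) :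
    Matrix.det (Matrix.of fun i j : Fin (k+1) =>
        if (i : ℕ) = 0 then (1:ℝ) else fd^[(i:ℕ) * m] S (n + j)) =
    Matrix.det (Matrix.of fun i j : Fin k => fd^[(i:ℕ) * m] (fd^[m+1] S) (n + j)) := by
  set A : Matrix (Fin (k+1)) (Fin (k+1)) ℝ :=
    Matrix.of fun i j => if (i : ℕ) = 0 then (1:ℝ) else fd^[(i:ℕ) * m] S (n + j) with hA
  set B : Matrix (Fin (k+1)) (Fin (k+1)) ℝ :=
    Matrix.of fun i j =>
      if (j : ℕ) = 0 then (if (i : ℕ) = 0 then (1:ℝ) else fd^[(i:ℕ) * m] S n)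
      else (if (i : ℕ) = 0 then 0 else fd^[(i:ℕ) * m + 1] S (n + (j:ℕ) - 1)) with hB
  have hAB : A.det = B.det := by
    apply Matrix.det_eq_of_forall_col_eq_smul_add_pred (fun _ => (1:ℝ))
    · intro i
      simp [hA, hB]
    · intro i j
      by_cases hi : (i : ℕ) = 0
      · simp [hA, hB, hi, Fin.val_succ, (Fin.ext hi : i = 0)]
      · have hsv : ((j.succ : Fin (k+1)) : ℕ) = (j : ℕ) + 1 := rfl
        have hcs : ((Fin.castSucc j : Fin (k+1)) : ℕ) = (j : ℕ) := rfl
        simp only [hA, hB, Matrix.of_apply, hsv, hcs, if_neg hi, Nat.succ_ne_zero,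
          if_false, one_mul]
        have h1 : n + ((j:ℕ) + 1) - 1 = n + (j:ℕ) := by omega
        have h2 : n + ((j:ℕ) + 1) = n + (j:ℕ) + 1 := by omega
        rw [h1, h2, Function.iterate_succ_apply' fd ((i:ℕ)*m) S]
        simp [fd]
  rw [hAB, Matrix.det_succ_row_zero]
  rw [Finset.sum_eq_single 0]
  · have h00 : B 0 0 = 1 := by simp [hB]
    simp only [h00, Fin.val_zero, pow_zero, one_mul, Fin.succAbove_zero]
    congr 1
    ext i j
    have hiv : ((Fin.succ i : Fin (k+1)) : ℕ) = (i : ℕ) + 1 := rfl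
    have hjv : ((Fin.succ j : Fin (k+1)) : ℕ) = (j : ℕ) + 1 := rfl
    simp only [Matrix.submatrix_apply, hB, Matrix.of_apply, hiv, hjv, Nat.succ_ne_zero,
      if_false]
    have h1 : n + ((j:ℕ) + 1) - 1 = n + (j:ℕ) := by omega
    have h2 : ((i:ℕ) + 1) * m + 1 = (i:ℕ) * m + (m + 1) := by ring
    rw [h1, h2, Function.iterate_add_apply fd ((i:ℕ)*m) (m+1) S]
  · intro j _ hj
    have hjz : B 0 j = 0 := by
      have : (j : ℕ) ≠ 0 := fun h => hj (Fin.ext h)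
      simp [hB, this]
      exact hj
    simp [hjz]
  · intro h
    exact absurd (Finset.mem_univ 0) h


lemma Hd_natCast (m : ℕ) (u : ℕ → ℝ) (k n : ℕ) :
    Hd m u (k : ℤ) n =
      Matrix.det (Matrix.of fun i j : Fin k => fd^[(i:ℕ) * m] u (n + (j:ℕ))) := by
  have h : ¬ ((k : ℤ) < 0) := by omega
  rw [Hd, if_neg h]
  rfl

lemma Hd_natCast_succ (m : ℕ) (u : ℕ → ℝ) (k n : ℕ) :
    Hd m u ((k : ℤ) + 1) n =
      Matrix.det (Matrix.of fun i j : Fin (k+1) => fd^[(i:ℕ) * m] u (n + (j:ℕ))) := by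
  have h : ((k : ℤ) + 1) = ((k + 1 : ℕ) : ℤ) := by push_cast; ring
  rw [h, Hd_natCast]

/-- Quasilinearity of the multistep Shanks transformation: let `a ≠ 0`, `b : ℝ` and
`T_n = a·S_n + b`. Then for every `k, n ≥ 0` with `H_k(Δ^{m+1}S_n) ≠ 0`, one has
`H_k(Δ^{m+1}T_n) = a^k · H_k(Δ^{m+1}S_n) ≠ 0` and
`H_{k+1}(T_n)/H_k(Δ^{m+1}T_n) = a · H_{k+1}(S_n)/H_k(Δ^{m+1}S_n) + b`,
i.e. `e_{k,m}(aS_n + b) = a·e_{k,m}(S_n) + b`. -/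
theorem stmt_18 (m : ℕ) (hm : 1 ≤ m) (S : ℕ → ℝ) (a b : ℝ) (ha : a ≠ 0)
    (T : ℕ → ℝ) (hT : ∀ n : ℕ, T n = a * S n + b) :
    ∀ k n : ℕ, Hd m (fd^[m + 1] S) (k : ℤ) n ≠ 0 →
      Hd m (fd^[m + 1] T) (k : ℤ) n = a ^ k * Hd m (fd^[m + 1] S) (k : ℤ) n ∧
      Hd m (fd^[m + 1] T) (k : ℤ) n ≠ 0 ∧
      Hd m T ((k : ℤ) + 1) n / Hd m (fd^[m + 1] T) (k : ℤ) n =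
        a * (Hd m S ((k : ℤ) + 1) n / Hd m (fd^[m + 1] S) (k : ℤ) n) + b := by
  intro k n hk
  have hnlt : ¬ ((k : ℤ) < 0) := by omega
  have hcast : ((k : ℤ)).toNat = k := Int.toNat_natCast k
  have hnlt1 : ¬ ((k : ℤ) + 1 < 0) := by omega
  have hcast1 : ((k : ℤ) + 1).toNat = k + 1 := by omega
  -- Part A: scaling of the denominator determinant
  have hTmat : (Matrix.of fun i j : Fin k => fd^[(i:ℕ)*m] (fd^[m+1] T) (n+(j:ℕ))) =
      a • (Matrix.of fun i j : Fin k => fd^[(i:ℕ)*m] (fd^[m+1] S) (n+(j:ℕ))) := by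
    ext i j
    simp only [Matrix.of_apply, Matrix.smul_apply, smul_eq_mul]
    rw [← Function.iterate_add_apply fd ((i:ℕ)*m) (m+1) T,
        ← Function.iterate_add_apply fd ((i:ℕ)*m) (m+1) S]
    have h2 : (i:ℕ)*m + (m+1) = ((i:ℕ)*m + m) + 1 := by ring
    rw [h2]
    exact fd_iter_affine a b S T hT _ _
  have hA : Hd m (fd^[m+1] T) (k:ℤ) n = a ^ k * Hd m (fd^[m+1] S) (k:ℤ) n := by
    rw [Hd_natCast, Hd_natCast, hTmat, Matrix.det_smul]
    simp
  refine ⟨hA, ?_, ?_⟩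
  · rw [hA]
    exact mul_ne_zero (pow_ne_zero _ ha) hk
  -- Part C: the numerator determinant
  set D : ℝ := Hd m (fd^[m+1] S) (k:ℤ) n with hD
  have hDdet : D = Matrix.det (Matrix.of fun i j : Fin k =>
      fd^[(i:ℕ)*m] (fd^[m+1] S) (n+(j:ℕ))) := by
    rw [hD, Hd_natCast]
  set MS : Matrix (Fin (k+1)) (Fin (k+1)) ℝ :=
    Matrix.of fun i j => fd^[(i:ℕ)*m] S (n+(j:ℕ)) with hMS
  set N : Matrix (Fin (k+1)) (Fin (k+1)) ℝ :=
    Matrix.of fun i j => if (i:ℕ) = 0 then (1:ℝ) else fd^[(i:ℕ)*m] S (n+(j:ℕ)) with hN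
  have hSnum : Hd m S ((k:ℤ)+1) n = MS.det := by
    rw [Hd_natCast_succ]
  -- row-0 facts
  have hval0 : ∀ i : Fin (k+1), (i : ℕ) = 0 → i = 0 := fun i h => Fin.ext h
  -- the T-matrix as an updateRow
  have hMT : (Matrix.of fun i j : Fin (k+1) => fd^[(i:ℕ)*m] T (n+(j:ℕ))) =
      Matrix.updateRow (a • MS) 0 (fun j : Fin (k+1) => a * S (n+(j:ℕ)) + b) := by
    ext i j
    by_cases hi : (i:ℕ) = 0
    · have : i = 0 := hval0 i hi
      subst this
      simp only [Matrix.of_apply, Matrix.updateRow_self]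
      simp [hi, hT]
    · have hine : i ≠ 0 := fun h => hi (by rw [h]; rfl)
      rw [Matrix.updateRow_ne hine]
      simp only [Matrix.of_apply, Matrix.smul_apply, smul_eq_mul, hMS]
      have h2 : (i:ℕ)*m = ((i:ℕ)*m - 1) + 1 := by
        have : 1 ≤ (i:ℕ)*m := Nat.one_le_iff_ne_zero.mpr (by positivity)
        omega
      rw [h2]
      exact fd_iter_affine a b S T hT _ _
  have hrow0 : (fun j : Fin (k+1) => a * S (n+(j:ℕ)) + b) =
      (a • fun j : Fin (k+1) => S (n+(j:ℕ))) + (b • fun _ : Fin (k+1) => (1:ℝ)) := by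
    funext j; simp
  have haMS0 : (a • MS) 0 = a • fun j : Fin (k+1) => S (n+(j:ℕ)) := by
    funext j
    simp only [Matrix.smul_apply, hMS, Matrix.of_apply, Pi.smul_apply, smul_eq_mul]
    norm_num
  set Q : Matrix (Fin (k+1)) (Fin (k+1)) ℝ :=
    Matrix.updateRow (a • MS) 0 (fun _ => (1:ℝ)) with hQ
  have hdetQ : Q.det = a ^ k * N.det := by
    have haN : a • N = Matrix.updateRow Q 0 (a • fun _ : Fin (k+1) => (1:ℝ)) := by
      ext i j
      by_cases hi : (i:ℕ) = 0
      · have : i = 0 := hval0 i hi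
        subst this
        simp [hN, hi]
      · have hine : i ≠ 0 := fun h => hi (by rw [h]; rfl)
        rw [Matrix.updateRow_ne hine, hQ, Matrix.updateRow_ne hine]
        simp [hN, hMS, hi, hine]
    have h1 : (a • N).det = a ^ (k+1) * N.det := by
      rw [Matrix.det_smul]; simp
    have h2 : (Matrix.updateRow Q 0 (a • fun _ : Fin (k+1) => (1:ℝ))).det = a * Q.det := by
      rw [Matrix.det_updateRow_smul]
      congr 1
      have : Q 0 = fun _ => (1:ℝ) := Matrix.updateRow_self
      rw [← this, Matrix.updateRow_eq_self]
    have h3 : a * (a ^ k * N.det) = a * Q.det := by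
      rw [← h2, ← haN, h1]; ring
    exact (mul_left_cancel₀ ha h3).symm
  have hNdet : N.det = D := by
    rw [hDdet, hN]
    exact key_det m k n S
  have hTnum : Hd m T ((k:ℤ)+1) n = a ^ (k+1) * MS.det + b * (a ^ k * D) := by
    rw [Hd_natCast_succ, hMT, hrow0, Matrix.det_updateRow_add, Matrix.det_updateRow_smul,
        Matrix.det_updateRow_smul, ← hQ, hdetQ, hNdet, ← Matrix.det_updateRow_smul,
        ← haMS0, Matrix.updateRow_eq_self, Matrix.det_smul]
    simp only [Fintype.card_fin]
  rw [hTnum, hA, hSnum]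
  have hak : a ^ k ≠ 0 := pow_ne_zero _ ha
  field_simp
  ring
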